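/- Fix an integer K ≥ 2 and reals ρ_i > 0, p ∈ (0,1], λ_t > 0, μ_t > 0 with λ_t·a_0 < μ_t, where ρ_{i,p} = ρ_i p and a_0 = Σ_{j=0}^{K} ρ_{i,p}^j. For each μ_i > 0 set λ_i = ρ_i·μ_i, and define: E_Ψ(μ_i) = a_1/μ_i with a_1 = Σ_{j=0}^{K−1} ρ_{i,p}^j; E_{Ψ²}(μ_i) = C/μ_i², where C > 0 depends only on ρ_{i,p} and K (C = μ_i²·Σ_{i=1}^{K} q^{i−1}c_i/(1−q)^i with q = ρ_{i,p}/(1+ρ_{i,p}) and the constants c_i of the busy-period second-moment formula); E_Υ = a_0/μ_t; and E_{Υ²}(μ_i) = 2a_0²/μ_t² + (ρ_{i,p}/(μ_t·μ_i²))·C. Define the lower sojourn time E^{M_L}(μ_i) = E_Υ + λ_t·E_{Υ²}(μ_i)/(2(1 − λ_t·E_Υ)) and the upper sojourn time E^{M_U}(μ_i) = (E_Υ + E_Ψ(μ_i)) + λ_t·(E_{Υ²}(μ_i) + E_{Ψ²}(μ_i) + 2E_Ψ(μ_i)·E_Υ)/(2(1 − λ_t·(E_Υ + E_Ψ(μ_i)))).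 Then, as μ_i → ∞, both E^{M_L}(μ_i) and E^{M_U}(μ_i) converge to a_0/(μ_t − λ_t·a_0); in particular E^{M_U}(μ_i) − E^{M_L}(μ_i) → 0. -/

import Mathlib

open Filter

/-- Expected sojourn time of the lower sandwiching M/G/1 system `𝓜_L`. -/
noncomputable def EML (K : ℕ) (r lamt μt C : ℝ) (μi : ℝ) : ℝ :=
  (∑ j ∈ Finset.range (K + 1), r ^ j) / μt
    + lamt * (2 * (∑ j ∈ Finset.range (K + 1), r ^ j) ^ 2 / μt ^ 2
        + (r / (μt * μi ^ 2)) * C)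
      / (2 * (1 - lamt * ((∑ j ∈ Finset.range (K + 1), r ^ j) / μt)))

/-- Expected sojourn time of the upper sandwiching M/G/1 system `𝓜_U`. -/
noncomputable def EMU (K : ℕ) (r lamt μt C : ℝ) (μi : ℝ) : ℝ :=
  ((∑ j ∈ Finset.range (K + 1), r ^ j) / μt + (∑ j ∈ Finset.range K, r ^ j) / μi)
    + lamt * ((2 * (∑ j ∈ Finset.range (K + 1), r ^ j) ^ 2 / μt ^ 2
          + (r / (μt * μi ^ 2)) * C)
        + C / μi ^ 2
        + 2 * ((∑ j ∈ Finset.range K, r ^ j) / μi)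
            * ((∑ j ∈ Finset.range (K + 1), r ^ j) / μt))
      / (2 * (1 - lamt * ((∑ j ∈ Finset.range (K + 1), r ^ j) / μt
            + (∑ j ∈ Finset.range K, r ^ j) / μi)))

/-- In the SFJ limit `μ_i → ∞` the sojourn times of the two sandwiching M/G/1
systems both converge to `a₀/(μ_t − λ_t a₀)`; in particular their difference
vanishes. -/
theorem sandwich_sojourn_times_converge
    (K : ℕ) (hK : 2 ≤ K) (ρ p lamt μt C : ℝ)
    (hρ : 0 < ρ) (hp0 : 0 < p) (hp1 : p ≤ 1) (hlamt : 0 < lamt) (hmut : 0 < μt)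
    (hC : 0 < C)
    (hstab : lamt * (∑ j ∈ Finset.range (K + 1), (ρ * p) ^ j) < μt) :
    Tendsto (EML K (ρ * p) lamt μt C) atTop
      (nhds ((∑ j ∈ Finset.range (K + 1), (ρ * p) ^ j)
        / (μt - lamt * (∑ j ∈ Finset.range (K + 1), (ρ * p) ^ j))))
    ∧ Tendsto (EMU K (ρ * p) lamt μt C) atTop
      (nhds ((∑ j ∈ Finset.range (K + 1), (ρ * p) ^ j)
        / (μt - lamt * (∑ j ∈ Finset.range (K + 1), (ρ * p) ^ j))))
    ∧ Tendsto (fun μi => EMU K (ρ * p) lamt μt C μi - EML K (ρ * p) lamt μt C μi)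
        atTop (nhds 0) := by
  set r := ρ * p with hrdef
  set a0 := ∑ j ∈ Finset.range (K + 1), r ^ j with ha0def
  set a1 := ∑ j ∈ Finset.range K, r ^ j with ha1def
  have hrpos : 0 < r := mul_pos hρ hp0
  have ha0 : 0 < a0 := Finset.sum_pos (fun j _ => pow_pos hrpos j) ⟨0, by simp⟩
  have hμt : μt ≠ 0 := hmut.ne'
  have hsub : 0 < μt - lamt * a0 := sub_pos.mpr hstab
  have hD : 0 < 1 - lamt * (a0 / μt) := by
    rw [sub_pos, mul_div_assoc']
    exact (div_lt_one hmut).mpr hstab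
  have hDne : (1 : ℝ) - lamt * (a0 / μt) ≠ 0 := hD.ne'
  -- basic tendsto facts
  have hx2 : Tendsto (fun x : ℝ => (r / (μt * x ^ 2)) * C) atTop (nhds 0) := by
    have h : Tendsto (fun x : ℝ => (μt * x ^ 2)⁻¹) atTop (nhds 0) :=
      tendsto_inv_atTop_zero.comp
        (Tendsto.const_mul_atTop hmut (tendsto_pow_atTop two_ne_zero))
    have := (h.const_mul r).mul_const C
    simpa [div_eq_mul_inv] using this
  have hC2 : Tendsto (fun x : ℝ => C / x ^ 2) atTop (nhds 0) := by
    have h : Tendsto (fun x : ℝ => (x ^ 2)⁻¹) atTop (nhds 0) :=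
      tendsto_inv_atTop_zero.comp (tendsto_pow_atTop two_ne_zero)
    simpa [div_eq_mul_inv] using h.const_mul C
  have ha1i : Tendsto (fun x : ℝ => a1 / x) atTop (nhds 0) := by
    simpa [div_eq_mul_inv] using tendsto_inv_atTop_zero.const_mul a1
  -- EML tendsto
  have hEML : Tendsto (EML K r lamt μt C) atTop
      (nhds (a0 / μt + lamt * (2 * a0 ^ 2 / μt ^ 2 + 0) / (2 * (1 - lamt * (a0 / μt))))) := by
    exact tendsto_const_nhds.add
      (((tendsto_const_nhds.add hx2).const_mul lamt).div_const _)
  -- EMU tendsto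
  have hA : Tendsto (fun μi : ℝ => a0 / μt + a1 / μi) atTop (nhds (a0 / μt + 0)) :=
    tendsto_const_nhds.add ha1i
  have hne : (2 : ℝ) * (1 - lamt * (a0 / μt + 0)) ≠ 0 := by
    simpa using hDne
  have hDen : Tendsto (fun μi : ℝ => 2 * (1 - lamt * (a0 / μt + a1 / μi))) atTop
      (nhds (2 * (1 - lamt * (a0 / μt + 0)))) :=
    ((tendsto_const_nhds.sub (hA.const_mul lamt)).const_mul 2)
  have hNum : Tendsto (fun μi : ℝ =>
      (2 * a0 ^ 2 / μt ^ 2 + (r / (μt * μi ^ 2)) * C) + C / μi ^ 2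
        + 2 * (a1 / μi) * (a0 / μt)) atTop
      (nhds ((2 * a0 ^ 2 / μt ^ 2 + 0) + 0 + 2 * 0 * (a0 / μt))) :=
    ((tendsto_const_nhds.add hx2).add hC2).add ((ha1i.const_mul 2).mul_const _)
  have hEMU : Tendsto (EMU K r lamt μt C) atTop
      (nhds ((a0 / μt + 0)
        + lamt * ((2 * a0 ^ 2 / μt ^ 2 + 0) + 0 + 2 * 0 * (a0 / μt))
          / (2 * (1 - lamt * (a0 / μt + 0))))) :=
    hA.add ((hNum.const_mul lamt).div hDen hne)
  -- identify the limits
  have hLlim : a0 / μt + lamt * (2 * a0 ^ 2 / μt ^ 2 + 0) / (2 * (1 - lamt * (a0 / μt)))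
      = a0 / (μt - lamt * a0) := by
    field_simp
    have hX : (-(a0 * lamt) + μt) * (-(a0 * lamt) + μt)⁻¹ = 1 := mul_inv_cancel₀ (by linarith)
    linear_combination (-2 * a0) * hX
  have hUlim : (a0 / μt + 0)
        + lamt * ((2 * a0 ^ 2 / μt ^ 2 + 0) + 0 + 2 * 0 * (a0 / μt))
          / (2 * (1 - lamt * (a0 / μt + 0)))
      = a0 / (μt - lamt * a0) := by
    rw [add_zero]
    simpa using hLlim
  rw [hLlim] at hEML
  rw [hUlim] at hEMU
  refine ⟨hEML, hEMU, ?_⟩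
  simpa using hEMU.sub hEML
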